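/- Let (Ω, F, P) be a probability space, (X_n)_{n∈ℕ} a sequence of real-valued measurable functions, and Φ : ℕ × ℕ → ℕ a rate of almost sure convergence, i.e. for all m, k ∈ ℕ there exists n ≤ Φ(m,k) such that for all l ∈ ℕ, P({ω : ∀ i, j ∈ [n, n+l], |X_i(ω) − X_j(ω)| ≤ 2^{-k}}) ≥ 1 − 2^{-m}. Then Φ is also a rate of almost uniform convergence: for all m, k ∈ ℕ there exists n ≤ Φ(m,k) with P({ω : ∀ i, j ≥ n, |X_i(ω) − X_j(ω)| ≤ 2^{-k}}) ≥ 1 − 2^{-m}. -/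

import Mathlib

open MeasureTheory Set ENNReal

theorem rate_as_convergence_to_rate_au_convergence {Ω : Type*} [MeasurableSpace Ω]
    (μ : Measure Ω) [IsProbabilityMeasure μ]
    (X : ℕ → Ω → ℝ) (hmeas : ∀ n, Measurable (X n))
    (Φ : ℕ → ℕ → ℕ)
    (hΦ : ∀ m k, ∃ n ≤ Φ m k, ∀ l : ℕ,
        1 - (1 / 2 : ℝ≥0∞) ^ m ≤
          μ {ω | ∀ i ∈ Set.Icc n (n + l), ∀ j ∈ Set.Icc n (n + l),
            |X i ω - X j ω| ≤ (1 / 2 : ℝ) ^ k}) :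
    ∀ m k, ∃ n ≤ Φ m k,
      1 - (1 / 2 : ℝ≥0∞) ^ m ≤
        μ {ω | ∀ i ≥ n, ∀ j ≥ n, |X i ω - X j ω| ≤ (1 / 2 : ℝ) ^ k} := by
  intro m k
  obtain ⟨n, hn, h⟩ := hΦ m k
  refine ⟨n, hn, ?_⟩
  set A : ℕ → Set Ω := fun l => {ω | ∀ i ∈ Set.Icc n (n + l), ∀ j ∈ Set.Icc n (n + l),
      |X i ω - X j ω| ≤ (1 / 2 : ℝ) ^ k} with hA
  have hmeasA : ∀ l, MeasurableSet (A l) := by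
    intro l
    have : A l = ⋂ i ∈ Set.Icc n (n + l), ⋂ j ∈ Set.Icc n (n + l),
        {ω | |X i ω - X j ω| ≤ (1 / 2 : ℝ) ^ k} := by
      ext ω; simp only [hA, Set.mem_iInter, Set.mem_setOf_eq]
    rw [this]
    refine MeasurableSet.biInter (Set.to_countable _) fun i _ =>
      MeasurableSet.biInter (Set.to_countable _) fun j _ => ?_
    exact measurableSet_le (((hmeas i).sub (hmeas j)).abs) measurable_const
  have hanti : Antitone A := by
    intro a b hab ω hω i hi j hj
    exact hω i ⟨hi.1, hi.2.trans (by omega)⟩ j ⟨hj.1, hj.2.trans (by omega)⟩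
  have hEq : {ω | ∀ i ≥ n, ∀ j ≥ n, |X i ω - X j ω| ≤ (1 / 2 : ℝ) ^ k} = ⋂ l, A l := by
    ext ω
    simp only [Set.mem_iInter, Set.mem_setOf_eq, hA, Set.mem_Icc]
    constructor
    · intro hω l i hi j hj
      exact hω i hi.1 j hj.1
    · intro hω i hi j hj
      exact hω (max i j - n) i ⟨hi, by omega⟩ j ⟨hj, by omega⟩
  rw [hEq]
  have := Antitone.measure_iInter (μ := μ) hanti (fun l => (hmeasA l).nullMeasurableSet)
    ⟨0, measure_ne_top μ _⟩
  rw [this]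
  exact le_iInf fun l => h l
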